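/- arXiv:1604.08217 — 2 statements merged into one kernel-verified Lean document; each statement's English description precedes it below -/
import Mathlib

section
/- Conservation of entanglement: let I and J be finite index types, ψ : I × J → ℂ a vector, and U, V unitary matrices on I and J respectively. Let ρ_L = Tr₂[ψ ψᴴ] denote the reduced density matrix of ψ (where ψψᴴ is the rank-one matrix with entries ψ_a · conj(ψ_b)), and let ρ_L' = Tr₂[((U ⊗ₖ V) ψ)((U ⊗ₖ V) ψ)ᴴ] be the reduced density matrix of the transformed state. Then ρ_L and ρ_L' are Hermitian positive semidefinite, ρ_L' = U ρ_L Uᴴ, and there exists a permutation π of I such that the eigenvalues of ρ_L' equal the eigenvalues of ρ_L composed with π; hence the entanglement entropy S(L) is invariant under tensor-product unitaries U ⊗ V. -/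
open Matrix
open Kronecker
open scoped ComplexOrder

open Polynomial in
/-- The characteristic polynomial of a diagonal matrix. -/
lemma charpoly_diagonal' {n : Type*} [Fintype n] [DecidableEq n] (d : n → ℂ) :
    (Matrix.diagonal d).charpoly = ∏ i, (X - C (d i)) := by
  have h : charmatrix (Matrix.diagonal d) = Matrix.diagonal fun i => X - C (d i) := by
    ext i j
    by_cases h : i = j
    · subst h; simp
    · simp [h]
  rw [Matrix.charpoly, h, Matrix.det_diagonal]

open Polynomial in
/-- The characteristic polynomial is invariant under unitary conjugation. -/
lemma charpoly_unitary_conj {n : Type*} [Fintype n] [DecidableEq n]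
    (W A : Matrix n n ℂ) (hW : W * Wᴴ = 1) :
    (W * A * Wᴴ).charpoly = A.charpoly := by
  set P := W.map (C : ℂ →+* ℂ[X]) with hP
  set Q := Wᴴ.map (C : ℂ →+* ℂ[X]) with hQ
  have hPQ : P * Q = 1 := by
    rw [hP, hQ, ← Matrix.map_mul, hW]
    simp
  have key : charmatrix (W * A * Wᴴ) = P * charmatrix A * Q := by
    unfold charmatrix
    rw [mul_sub, sub_mul]
    congr 1
    · have : P * Matrix.scalar n (X : ℂ[X]) = Matrix.scalar n (X : ℂ[X]) * P := by
        ext i j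
        simp [Matrix.scalar, Matrix.mul_diagonal, Matrix.diagonal_mul, mul_comm]
      rw [this, mul_assoc, hPQ, mul_one]
    · simp only [RingHom.mapMatrix_apply]
      rw [hP, hQ, ← Matrix.map_mul, ← Matrix.map_mul]
  rw [Matrix.charpoly, Matrix.charpoly, key, det_mul, det_mul]
  have hdet : P.det * Q.det = 1 := by rw [← det_mul, hPQ, det_one]
  calc P.det * (charmatrix A).det * Q.det
      = (charmatrix A).det * (P.det * Q.det) := by ring
    _ = (charmatrix A).det := by rw [hdet, mul_one]

open Polynomial in
/-- The characteristic polynomial of a Hermitian matrix factors through its eigenvalues. -/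
lemma hermitian_charpoly_eq {n : Type*} [Fintype n] [DecidableEq n]
    {A : Matrix n n ℂ} (hA : A.IsHermitian) :
    A.charpoly = ∏ i, (X - C ((hA.eigenvalues i : ℝ) : ℂ)) := by
  conv_lhs => rw [hA.spectral_theorem]
  have hW : (hA.eigenvectorUnitary : Matrix n n ℂ) *
      (hA.eigenvectorUnitary : Matrix n n ℂ)ᴴ = 1 := by
    simpa [Matrix.star_eq_conjTranspose] using hA.eigenvectorUnitary.prop.2
  rw [Unitary.conjStarAlgAut_apply, show (star (hA.eigenvectorUnitary : Matrix n n ℂ)) =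
      (hA.eigenvectorUnitary : Matrix n n ℂ)ᴴ from rfl,
    charpoly_unitary_conj _ _ hW, charpoly_diagonal']
  rfl

open Polynomial in
/-- The roots of the characteristic polynomial of a Hermitian matrix are its eigenvalues. -/
lemma hermitian_roots {n : Type*} [Fintype n] [DecidableEq n]
    {A : Matrix n n ℂ} (hA : A.IsHermitian) :
    A.charpoly.roots = Multiset.map (fun i => ((hA.eigenvalues i : ℝ) : ℂ)) Finset.univ.val := by
  rw [hermitian_charpoly_eq hA]
  rw [Finset.prod, show (fun i => X - C ((hA.eigenvalues i : ℝ) : ℂ)) =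
      (fun a : ℂ => X - C a) ∘ (fun i => ((hA.eigenvalues i : ℝ) : ℂ)) from rfl,
    ← Multiset.map_map, roots_multiset_prod_X_sub_C]

/-- Two functions on a fintype with equal value multisets differ by a permutation. -/
lemma exists_perm_comp_eq {α β : Type*} [Fintype α] {f g : α → β}
    (h : Multiset.map f Finset.univ.val = Multiset.map g Finset.univ.val) :
    ∃ π : Equiv.Perm α, f = g ∘ π := by
  classical
  have hcard : ∀ b : β, Fintype.card {a // f a = b} = Fintype.card {a // g a = b} := by
    intro b
    have := congrArg (Multiset.count b) h
    rw [Multiset.count_map, Multiset.count_map] at this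
    rw [Fintype.card_subtype, Fintype.card_subtype]
    simpa [Finset.filter, eq_comm] using this
  let e : ∀ b, {a // f a = b} ≃ {a // g a = b} := fun b => Fintype.equivOfCardEq (hcard b)
  refine ⟨(Equiv.sigmaFiberEquiv f).symm.trans
    ((Equiv.sigmaCongrRight e).trans (Equiv.sigmaFiberEquiv g)), ?_⟩
  funext a
  simp only [Function.comp_apply, Equiv.trans_apply, Equiv.sigmaFiberEquiv,
    Equiv.sigmaCongrRight, Equiv.coe_fn_symm_mk, Equiv.coe_fn_mk]
  exact (e (f a) ⟨a, rfl⟩).2.symm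

/-- Partial trace over the second tensor factor:
`(Tr₂ M) i i' = ∑ j, M (i,j) (i',j)`. -/
noncomputable def trace2 {I J : Type*} [Fintype J] (M : Matrix (I × J) (I × J) ℂ) :
    Matrix I I ℂ :=
  fun i i' => ∑ j : J, M (i, j) (i', j)

/-- The reduced density matrix of `χ` is `A * Aᴴ` where `A i j = χ (i, j)`. -/
lemma trace2_vecMulVec {I J : Type*} [Fintype I] [Fintype J] (χ : I × J → ℂ) :
    trace2 (vecMulVec χ (star χ)) =
      (Matrix.of fun i j => χ (i, j)) * (Matrix.of fun i j => χ (i, j))ᴴ := by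
  ext i i'
  simp [trace2, vecMulVec_apply, Matrix.mul_apply, conjTranspose_apply, Pi.star_apply]

/-- Conservation of entanglement: for a bipartite state `ψ` and unitaries `U`, `V`,
the reduced density matrices `ρ_L = Tr₂[ψψᴴ]` and
`ρ_L' = Tr₂[((U ⊗ₖ V)ψ)((U ⊗ₖ V)ψ)ᴴ]` are Hermitian positive semidefinite,
`ρ_L' = U ρ_L Uᴴ`, and the eigenvalues of `ρ_L'` are a permutation of those of
`ρ_L`; hence the entanglement entropy is invariant under `U ⊗ V`. -/
theorem entanglement_conservation
    {I J : Type*} [Fintype I] [Fintype J] [DecidableEq I] [DecidableEq J]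
    (ψ : I × J → ℂ) (U : Matrix I I ℂ) (V : Matrix J J ℂ)
    (hU : U * Uᴴ = 1) (hU' : Uᴴ * U = 1)
    (hV : V * Vᴴ = 1) (hV' : Vᴴ * V = 1) :
    ∃ (h1 : (trace2 (vecMulVec ψ (star ψ))).PosSemidef)
      (h2 : (trace2 (vecMulVec ((U ⊗ₖ V) *ᵥ ψ) (star ((U ⊗ₖ V) *ᵥ ψ)))).PosSemidef),
      trace2 (vecMulVec ((U ⊗ₖ V) *ᵥ ψ) (star ((U ⊗ₖ V) *ᵥ ψ))) =
        U * trace2 (vecMulVec ψ (star ψ)) * Uᴴ ∧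
      ∃ π : Equiv.Perm I, h2.1.eigenvalues = h1.1.eigenvalues ∘ π := by
  classical
  set A : Matrix I J ℂ := Matrix.of fun i j => ψ (i, j) with hA
  set φ : I × J → ℂ := (U ⊗ₖ V) *ᵥ ψ with hφ
  have hρ : trace2 (vecMulVec ψ (star ψ)) = A * Aᴴ := trace2_vecMulVec ψ
  have hB : (Matrix.of fun i j => φ (i, j)) = U * A * Vᵀ := by
    ext i j
    simp only [hφ, Matrix.of_apply, Matrix.mulVec, dotProduct,
      Matrix.kroneckerMap_apply, Fintype.sum_prod_type, Matrix.mul_apply,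
      Matrix.transpose_apply, Finset.sum_mul, hA]
    rw [Finset.sum_comm]
    apply Finset.sum_congr rfl
    intro j' _
    apply Finset.sum_congr rfl
    intro i' _
    ring
  have hρ' : trace2 (vecMulVec φ (star φ)) = (U * A * Vᵀ) * (U * A * Vᵀ)ᴴ := by
    rw [trace2_vecMulVec φ, hB]
  have hVV : Vᵀ * (Vᵀ)ᴴ = 1 := by
    have ht : (Vᵀ)ᴴ = (Vᴴ)ᵀ := by
      ext i j; simp [conjTranspose_apply, transpose_apply]
    rw [ht, ← transpose_mul, hV', transpose_one]
  have hconj : (U * A * Vᵀ) * (U * A * Vᵀ)ᴴ = U * (A * Aᴴ) * Uᴴ := by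
    rw [conjTranspose_mul, conjTranspose_mul]
    simp only [Matrix.mul_assoc]
    rw [← Matrix.mul_assoc Vᵀ, hVV, Matrix.one_mul]
  have h1 : (trace2 (vecMulVec ψ (star ψ))).PosSemidef := by
    rw [hρ]; exact Matrix.posSemidef_self_mul_conjTranspose A
  have h2 : (trace2 (vecMulVec φ (star φ))).PosSemidef := by
    rw [hρ']; exact Matrix.posSemidef_self_mul_conjTranspose (U * A * Vᵀ)
  have heq : trace2 (vecMulVec φ (star φ)) = U * trace2 (vecMulVec ψ (star ψ)) * Uᴴ := by
    rw [hρ', hρ, hconj]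
  refine ⟨h1, h2, heq, ?_⟩
  have hcp : (trace2 (vecMulVec φ (star φ))).charpoly =
      (trace2 (vecMulVec ψ (star ψ))).charpoly := by
    rw [heq]
    exact charpoly_unitary_conj U _ hU
  have hmul : Multiset.map (fun i => ((h2.1.eigenvalues i : ℝ) : ℂ)) Finset.univ.val =
      Multiset.map (fun i => ((h1.1.eigenvalues i : ℝ) : ℂ)) Finset.univ.val := by
    rw [← hermitian_roots h2.1, ← hermitian_roots h1.1, hcp]
  have hreal : Multiset.map h2.1.eigenvalues Finset.univ.val =
      Multiset.map h1.1.eigenvalues Finset.univ.val := by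
    apply Multiset.map_injective (f := (Complex.ofReal : ℝ → ℂ)) Complex.ofReal_injective
    rw [Multiset.map_map, Multiset.map_map]
    exact hmul
  exact exists_perm_comp_eq hreal
end

section
/- Concavity of the area element ("the area has negative second derivative in λ"): let n > 0 be a real number and θ, A : ℝ → ℝ be differentiable with A(λ) > 0 for all λ, A'(λ) = θ(λ) · A(λ) for all λ, and θ'(λ) ≤ −θ(λ)²/n for all λ. Then the function λ ↦ A(λ)^{1/n} is concave on ℝ. -/
/-- Concavity of the area element: if `A' = θ A` with `A > 0` and the expansion
satisfies the Raychaudhuri inequality `θ' ≤ −θ²/n`, then `λ ↦ A(λ)^{1/n}` is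
concave on `ℝ`. -/
theorem area_element_rpow_concave
    (n : ℝ) (hn : 0 < n) (θ A : ℝ → ℝ)
    (hθ : Differentiable ℝ θ) (hA : Differentiable ℝ A)
    (hApos : ∀ l : ℝ, 0 < A l)
    (hA' : ∀ l : ℝ, deriv A l = θ l * A l)
    (hθ' : ∀ l : ℝ, deriv θ l ≤ -(θ l) ^ 2 / n) :
    ConcaveOn ℝ Set.univ (fun l : ℝ => A l ^ (1 / n : ℝ)) := by
  set f : ℝ → ℝ := fun l => A l ^ (1 / n : ℝ) with hf
  have hfd : ∀ l, HasDerivAt f (θ l / n * f l) l := by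
    intro l
    have h1 : HasDerivAt A (θ l * A l) l := by
      rw [← hA' l]; exact (hA l).hasDerivAt
    have := h1.rpow_const (p := (1/n : ℝ)) (Or.inl (hApos l).ne')
    convert this using 1
    have hAne : A l ≠ 0 := (hApos l).ne'
    rw [hf]
    rw [Real.rpow_sub (hApos l), Real.rpow_one]
    field_simp
  have hDf : Differentiable ℝ f := fun l => (hfd l).differentiableAt
  have hderiv : deriv f = fun l => θ l / n * f l := funext fun l => (hfd l).deriv
  have hfpos : ∀ l, 0 < f l := fun l => Real.rpow_pos_of_pos (hApos l) _
  have hgd : ∀ l, HasDerivAt (fun l => θ l / n * f l)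
      ((deriv θ l / n) * f l + θ l / n * (θ l / n * f l)) l := by
    intro l
    exact (((hθ l).hasDerivAt.div_const n)).mul (hfd l)
  refine concaveOn_univ_of_deriv2_nonpos hDf ?_ ?_
  · rw [hderiv]; exact fun l => (hgd l).differentiableAt
  · intro l
    have : deriv^[2] f l = (deriv θ l / n) * f l + θ l / n * (θ l / n * f l) := by
      simp only [Function.iterate_succ, Function.iterate_zero, Function.comp_apply, id]
      rw [hderiv]
      exact (hgd l).deriv
    rw [this]
    have h2 : deriv θ l * n ≤ -(θ l) ^ 2 := (le_div_iff₀ hn).mp (hθ' l)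
    have heq : deriv θ l / n * f l + θ l / n * (θ l / n * f l)
        = f l * (deriv θ l * n + θ l ^ 2) / n ^ 2 := by
      field_simp
    rw [heq]
    apply div_nonpos_of_nonpos_of_nonneg
    · exact mul_nonpos_of_nonneg_of_nonpos (hfpos l).le (by linarith)
    · positivity
end
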